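/- With the 3-SAT construction of π_1, π_2 as described, suppose z_1, z_2 are natural numbers such that π_1^{z_1} π_2^{z_2} is fixpoint-free. Then for all i ∈ [n] we have z_1 ≢ 0 mod p_i and z_1 ≢ 0 mod p̄_i. -/

import Mathlib

/-! 3-SAT construction.  Variables are `x_1, …, x_n`, indexed by `Fin n`; the `j`-th clause is
`C_j = {x̃_{idx j 0}, x̃_{idx j 1}, x̃_{idx j 2}}` with `idx j` strictly monotone, where the
literal on variable `idx j a` is negated iff `neg j a = true`.  The first `2n` primes are
`p_1, …, p_n, p̄_1, …, p̄_n` with `p_i = P (i-1)` and `p̄_i = P (n+i-1)` for the enumeration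
`P` of the primes (`P 0 = 2`).  Every `Sym(ℓ)`-component is realized on `Fin ℓ`, and the
`ℓ`-cycle `([ℓ]) = (1,2,…,ℓ)` is realized as `finRotate ℓ`.  Fixpoint-freeness is checked on
the disjoint union of all components. -/

namespace SatConstruction

/-- `P i` is the `(i+1)`-st prime: `P 0 = 2`, `P 1 = 3`, ….  The prime `p_i` associated with
the positive literal `x_i` is `P (i-1)` and the prime `p̄_i` associated with the negative
literal `x̄_i` is `P (n+i-1)` (with `i ∈ [n]` one-indexed). -/
noncomputable def P (i : ℕ) : ℕ := Nat.nth Nat.Prime i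

/-- `p̃` of a literal: the prime of the underlying variable, according to the sign. -/
noncomputable def ptil (n : ℕ) {m : ℕ} (idx : Fin m → Fin 3 → Fin n)
    (neg : Fin m → Fin 3 → Bool) (j : Fin m) (a : Fin 3) : ℕ :=
  if neg j a then P (n + (idx j a).val) else P (idx j a).val

/-- `r_j = p̃_{i_1} p̃_{i_2} p̃_{i_3}` for the clause `C_j`. -/
noncomputable def r (n : ℕ) {m : ℕ} (idx : Fin m → Fin 3 → Fin n)
    (neg : Fin m → Fin 3 → Bool) (j : Fin m) : ℕ :=
  ptil n idx neg j 0 * ptil n idx neg j 1 * ptil n idx neg j 2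

/-- The underlying set of the group
`G = ∏_{i=1}^n (Sym(p_i) × Sym(p̄_i) × Sym(p_i p̄_i)^{(p_i-1)(p̄_i-1)+1}) × ∏_{j=1}^m Sym(r_j)`
(embedded in a symmetric group).  The `(p_i-1)(p̄_i-1)+1` copies of `Sym(p_i p̄_i)` are
indexed by `Option (Fin (p_i - 1) × Fin (p̄_i - 1))`: `none` is the component of `α_{i,3}`
and `some (l-1, k-1)` is the component of `α_{i,l,k}`. -/
abbrev Omega (n : ℕ) {m : ℕ} (idx : Fin m → Fin 3 → Fin n)
    (neg : Fin m → Fin 3 → Bool) : Type :=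
  (Σ i : Fin n,
      (Fin (P i.val) ⊕ Fin (P (n + i.val))) ⊕
        (Σ _c : Option (Fin (P i.val - 1) × Fin (P (n + i.val) - 1)),
          Fin (P i.val * P (n + i.val)))) ⊕
    (Σ j : Fin m, Fin (r n idx neg j))

/-- `π_1 = (α_1,…,α_n,β_1,…,β_m)` with
`α_i = (α_{i,1}, α_{i,2}, α_{i,3}, α_{i,1,1}, …, α_{i,p_i-1,p̄_i-1})`,
`α_{i,1} = ([p_i])`, `α_{i,2} = ([p̄_i])`, `α_{i,3} = id`,
`α_{i,l,k} = ([p_i p̄_i])^{s_{i,l,k}}` and `β_j = id`. -/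
noncomputable def pi1 (n : ℕ) {m : ℕ} (idx : Fin m → Fin 3 → Fin n)
    (neg : Fin m → Fin 3 → Bool) (s : Fin n → ℕ → ℕ → ℕ) :
    Equiv.Perm (Omega n idx neg) :=
  Equiv.sumCongr
    (Equiv.sigmaCongrRight fun i =>
      Equiv.sumCongr
        (Equiv.sumCongr (finRotate _) (finRotate _))
        (Equiv.sigmaCongrRight fun c =>
          match c with
          | none => Equiv.refl _
          | some (l, k) =>
              finRotate (P i.val * P (n + i.val)) ^ s i (l.val + 1) (k.val + 1)))
    (Equiv.refl _)

/-- `π_2 = (γ_1,…,γ_n,δ_1,…,δ_m)` with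
`γ_i = (γ_{i,1}, γ_{i,2}, γ_{i,3}, γ_{i,1,1}, …, γ_{i,p_i-1,p̄_i-1})`,
`γ_{i,1} = γ_{i,2} = id`, `γ_{i,3} = γ_{i,l,k} = ([p_i p̄_i])` and `δ_j = ([r_j])`. -/
noncomputable def pi2 (n : ℕ) {m : ℕ} (idx : Fin m → Fin 3 → Fin n)
    (neg : Fin m → Fin 3 → Bool) :
    Equiv.Perm (Omega n idx neg) :=
  Equiv.sumCongr
    (Equiv.sigmaCongrRight fun _i =>
      Equiv.sumCongr (Equiv.refl _) (Equiv.sigmaCongrRight fun _c => finRotate _))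
    (Equiv.sigmaCongrRight fun j => finRotate (r n idx neg j))


open Fin.NatCast Fin.CommRing in
private lemma finRotate_succ_pow_apply (m k : ℕ) (x : Fin (m + 1)) :
    (finRotate (m + 1) ^ k) x = x + (k : Fin (m + 1)) := by
  induction k with
  | zero => simp
  | succ k ih =>
      rw [pow_succ', Equiv.Perm.mul_apply, ih, finRotate_succ_apply]
      push_cast
      ring

open Fin.NatCast Fin.CommRing in
private lemma finRotate_pow_self (p : ℕ) : finRotate p ^ p = 1 := by
  cases p with
  | zero => exact Subsingleton.elim _ _
  | succ m =>
      ext x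
      rw [finRotate_succ_pow_apply]
      simp

private lemma finRotate_pow_of_dvd {p z : ℕ} (h : p ∣ z) : finRotate p ^ z = 1 := by
  obtain ⟨c, rfl⟩ := h
  rw [pow_mul, finRotate_pow_self, one_pow]

private lemma pi1_pow_left (n : ℕ) {m : ℕ} (idx : Fin m → Fin 3 → Fin n)
    (neg : Fin m → Fin 3 → Bool) (s : Fin n → ℕ → ℕ → ℕ) (z : ℕ) (i : Fin n)
    (x : Fin (P i.val)) :
    (pi1 n idx neg s ^ z) (Sum.inl ⟨i, Sum.inl (Sum.inl x)⟩) =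
      Sum.inl ⟨i, Sum.inl (Sum.inl ((finRotate _ ^ z) x))⟩ := by
  induction z with
  | zero => simp
  | succ z ih =>
      rw [pow_succ', Equiv.Perm.mul_apply, ih, pow_succ, Equiv.Perm.mul_apply]
      simp only [pi1, Equiv.sumCongr_apply, Sum.map_inl, Equiv.sigmaCongrRight_apply,
        Sigma.map, Equiv.sumCongr_apply, Sum.map_inl, Sum.map_inr]
      rw [← Equiv.Perm.mul_apply, ← Equiv.Perm.mul_apply, ← pow_succ, ← pow_succ']

private lemma pi1_pow_right (n : ℕ) {m : ℕ} (idx : Fin m → Fin 3 → Fin n)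
    (neg : Fin m → Fin 3 → Bool) (s : Fin n → ℕ → ℕ → ℕ) (z : ℕ) (i : Fin n)
    (x : Fin (P (n + i.val))) :
    (pi1 n idx neg s ^ z) (Sum.inl ⟨i, Sum.inl (Sum.inr x)⟩) =
      Sum.inl ⟨i, Sum.inl (Sum.inr ((finRotate _ ^ z) x))⟩ := by
  induction z with
  | zero => simp
  | succ z ih =>
      rw [pow_succ', Equiv.Perm.mul_apply, ih, pow_succ, Equiv.Perm.mul_apply]
      simp only [pi1, Equiv.sumCongr_apply, Sum.map_inl, Equiv.sigmaCongrRight_apply,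
        Sigma.map, Equiv.sumCongr_apply, Sum.map_inl, Sum.map_inr]
      rw [← Equiv.Perm.mul_apply, ← Equiv.Perm.mul_apply, ← pow_succ, ← pow_succ']

private lemma pi2_pow_fix (n : ℕ) {m : ℕ} (idx : Fin m → Fin 3 → Fin n)
    (neg : Fin m → Fin 3 → Bool) (z : ℕ) (i : Fin n)
    (x : Fin (P i.val) ⊕ Fin (P (n + i.val))) :
    (pi2 n idx neg ^ z) (Sum.inl ⟨i, Sum.inl x⟩) = Sum.inl ⟨i, Sum.inl x⟩ := by
  induction z with
  | zero => simp
  | succ z ih => rw [pow_succ', Equiv.Perm.mul_apply, ih]; rfl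

/-- If `π_1^{z_1} π_2^{z_2}` is fixpoint-free then for all `i ∈ [n]` we have
`z_1 ≢ 0 (mod p_i)` and `z_1 ≢ 0 (mod p̄_i)`. -/
theorem z1_not_dvd
    (n m : ℕ) (idx : Fin m → Fin 3 → Fin n) (hidx : ∀ j, StrictMono (idx j))
    (neg : Fin m → Fin 3 → Bool)
    (s : Fin n → ℕ → ℕ → ℕ)
    -- `s_{i,l,k}` is the unique number in `[0, p_i p̄_i - 1]` with `s_{i,l,k} ≡ l (mod p_i)`
    -- and `s_{i,l,k} ≡ k (mod p̄_i)`, for `l ∈ [p_i - 1]` and `k ∈ [p̄_i - 1]`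
    (hs : ∀ i : Fin n, ∀ l k : ℕ, 1 ≤ l → l < P i.val → 1 ≤ k → k < P (n + i.val) →
      s i l k < P i.val * P (n + i.val) ∧
        s i l k % P i.val = l ∧ s i l k % P (n + i.val) = k)
    (z1 z2 : ℕ)
    (hfpf : ∀ a : Omega n idx neg,
      (pi1 n idx neg s ^ z1 * pi2 n idx neg ^ z2) a ≠ a) :
    ∀ i : Fin n, ¬ P i.val ∣ z1 ∧ ¬ P (n + i.val) ∣ z1 := by

  intro i
  have hp : (P i.val).Prime := Nat.prime_nth_prime _
  have hq : (P (n + i.val)).Prime := Nat.prime_nth_prime _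
  constructor
  · intro hdvd
    have x : Fin (P i.val) := ⟨0, hp.pos⟩
    apply hfpf (Sum.inl ⟨i, Sum.inl (Sum.inl x)⟩)
    rw [Equiv.Perm.mul_apply, pi2_pow_fix, pi1_pow_left, finRotate_pow_of_dvd hdvd]
    rfl
  · intro hdvd
    have x : Fin (P (n + i.val)) := ⟨0, hq.pos⟩
    apply hfpf (Sum.inl ⟨i, Sum.inl (Sum.inr x)⟩)
    rw [Equiv.Perm.mul_apply, pi2_pow_fix, pi1_pow_right, finRotate_pow_of_dvd hdvd]
    rfl


end SatConstruction
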